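/- Let f : R → S be a homomorphism of commutative rings and g, h : S → T two ring homomorphisms with g ∘ f = h ∘ f. Let ξ ∈ R be a nonzerodivisor whose images f(ξ) ∈ S and g(f(ξ)) ∈ T are also nonzerodivisors. If the induced diagram R/(ξ) → S/(ξ) ⇉ T/(ξ) is an equalizer diagram of rings, then for every n ≥ 1 the induced diagram R/(ξⁿ) → S/(ξⁿ) ⇉ T/(ξⁿ) is an equalizer diagram. -/

import Mathlib

/-- A diagram of commutative rings `R → S ⇉ T`, given by `f : R →+* S` and a parallel pair
`g h : S →+* T`, is an *equalizer diagram* if `f` is injective and its image is exactly the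
set of elements of `S` on which `g` and `h` agree. -/
def IsEqualizerDiagram {R S T : Type*} [CommRing R] [CommRing S] [CommRing T]
    (f : R →+* S) (g h : S →+* T) : Prop :=
  Function.Injective f ∧ Set.range f = {s | g s = h s}

lemma aux_equalizer {R S T : Type*} [CommRing R] [CommRing S] [CommRing T]
    (f : R →+* S) (g h : S →+* T) (hgf : g.comp f = h.comp f)
    {I : Ideal R} {J : Ideal S} {K : Ideal T}
    (hIJ : I ≤ J.comap f) (hJKg : J ≤ K.comap g) (hJKh : J ≤ K.comap h)
    (hinj : ∀ r, f r ∈ J → r ∈ I)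
    (hsurj : ∀ s, g s - h s ∈ K → ∃ r, s - f r ∈ J) :
    IsEqualizerDiagram (Ideal.quotientMap J f hIJ) (Ideal.quotientMap K g hJKg)
      (Ideal.quotientMap K h hJKh) := by
  constructor
  · intro x y hxy
    obtain ⟨r, rfl⟩ := Ideal.Quotient.mk_surjective x
    obtain ⟨r', rfl⟩ := Ideal.Quotient.mk_surjective y
    rw [Ideal.quotientMap_mk, Ideal.quotientMap_mk, Ideal.Quotient.eq, ← map_sub] at hxy
    rw [Ideal.Quotient.eq]
    exact hinj _ hxy
  · ext x
    obtain ⟨s, rfl⟩ := Ideal.Quotient.mk_surjective x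
    simp only [Set.mem_range, Set.mem_setOf_eq]
    constructor
    · rintro ⟨y, hy⟩
      obtain ⟨r, rfl⟩ := Ideal.Quotient.mk_surjective y
      rw [← hy]
      simp only [Ideal.quotientMap_mk]
      exact congrArg _ (RingHom.congr_fun hgf r)
    · intro hx
      rw [Ideal.quotientMap_mk, Ideal.quotientMap_mk, Ideal.Quotient.eq] at hx
      obtain ⟨r, hr⟩ := hsurj s hx
      refine ⟨Ideal.Quotient.mk I r, ?_⟩
      rw [Ideal.quotientMap_mk, Ideal.Quotient.eq]
      simpa using J.neg_mem hr

/-- If `R → S ⇉ T` commutes, `ξ ∈ R` is a nonzerodivisor whose images in `S` and `T` are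
nonzerodivisors, and the induced diagram modulo `ξ` is an equalizer diagram, then the induced
diagram modulo `ξⁿ` is an equalizer diagram for every `n ≥ 1`. -/
theorem statement0 {R S T : Type*} [CommRing R] [CommRing S] [CommRing T]
    (f : R →+* S) (g h : S →+* T) (hgf : g.comp f = h.comp f)
    (ξ : R) (hξ : ξ ∈ nonZeroDivisors R) (hfξ : f ξ ∈ nonZeroDivisors S)
    (hgfξ : g (f ξ) ∈ nonZeroDivisors T)
    (H1 : IsEqualizerDiagram
      (Ideal.quotientMap (Ideal.span {f ξ}) f (by
        rw [Ideal.span_le, Set.singleton_subset_iff, SetLike.mem_coe, Ideal.mem_comap]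
        exact Ideal.subset_span rfl))
      (Ideal.quotientMap (Ideal.span {g (f ξ)}) g (by
        rw [Ideal.span_le, Set.singleton_subset_iff, SetLike.mem_coe, Ideal.mem_comap]
        exact Ideal.subset_span rfl))
      (Ideal.quotientMap (Ideal.span {g (f ξ)}) h (by
        have e : g (f ξ) = h (f ξ) := RingHom.congr_fun hgf ξ
        rw [Ideal.span_le, Set.singleton_subset_iff, SetLike.mem_coe, Ideal.mem_comap, ← e]
        exact Ideal.subset_span rfl))) :
    ∀ n : ℕ, 1 ≤ n → IsEqualizerDiagram
      (Ideal.quotientMap (Ideal.span {f ξ ^ n}) f (by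
        rw [Ideal.span_le, Set.singleton_subset_iff, SetLike.mem_coe, Ideal.mem_comap, map_pow]
        exact Ideal.subset_span rfl))
      (Ideal.quotientMap (Ideal.span {g (f ξ) ^ n}) g (by
        rw [Ideal.span_le, Set.singleton_subset_iff, SetLike.mem_coe, Ideal.mem_comap, map_pow]
        exact Ideal.subset_span rfl))
      (Ideal.quotientMap (Ideal.span {g (f ξ) ^ n}) h (by
        have e : g (f ξ) = h (f ξ) := RingHom.congr_fun hgf ξ
        rw [Ideal.span_le, Set.singleton_subset_iff, SetLike.mem_coe, Ideal.mem_comap, map_pow,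
          ← e]
        exact Ideal.subset_span rfl)) := by
  have e : g (f ξ) = h (f ξ) := RingHom.congr_fun hgf ξ
  -- elementwise form of the base case
  have hinj1 : ∀ r, f ξ ∣ f r → ξ ∣ r := by
    intro r hr
    have h0 : Ideal.quotientMap (Ideal.span {f ξ}) f (by
        rw [Ideal.span_le, Set.singleton_subset_iff, SetLike.mem_coe, Ideal.mem_comap]
        exact Ideal.subset_span rfl) (Ideal.Quotient.mk _ r) = 0 := by
      rw [Ideal.quotientMap_mk, Ideal.Quotient.eq_zero_iff_mem, Ideal.mem_span_singleton]
      exact hr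
    have := H1.1 (a₁ := Ideal.Quotient.mk _ r) (a₂ := 0) (by simpa using h0)
    rwa [Ideal.Quotient.eq_zero_iff_mem, Ideal.mem_span_singleton] at this
  have hsurj1 : ∀ s, g (f ξ) ∣ g s - h s → ∃ r, f ξ ∣ s - f r := by
    intro s hs
    have hmem : (Ideal.Quotient.mk (Ideal.span {f ξ}) s) ∈
        {x | Ideal.quotientMap (Ideal.span {g (f ξ)}) g (by
            rw [Ideal.span_le, Set.singleton_subset_iff, SetLike.mem_coe, Ideal.mem_comap]
            exact Ideal.subset_span rfl) x =
          Ideal.quotientMap (Ideal.span {g (f ξ)}) h (by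
            rw [Ideal.span_le, Set.singleton_subset_iff, SetLike.mem_coe, Ideal.mem_comap, ← e]
            exact Ideal.subset_span rfl) x} := by
      simp only [Set.mem_setOf_eq, Ideal.quotientMap_mk, Ideal.Quotient.eq, ← map_sub]
      rw [Ideal.mem_span_singleton]
      exact hs
    rw [← H1.2] at hmem
    obtain ⟨y, hy⟩ := hmem
    obtain ⟨r, rfl⟩ := Ideal.Quotient.mk_surjective y
    rw [Ideal.quotientMap_mk, Ideal.Quotient.eq, Ideal.mem_span_singleton] at hy
    obtain ⟨u, hu⟩ := hy
    exact ⟨r, ⟨-u, by rw [← neg_sub (f r) s, hu]; ring⟩⟩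
  -- the key dévissage, stated elementwise
  have key : ∀ n : ℕ, 1 ≤ n →
      (∀ r, f ξ ^ n ∣ f r → ξ ^ n ∣ r) ∧
      (∀ s, g (f ξ) ^ n ∣ g s - h s → ∃ r, f ξ ^ n ∣ s - f r) := by
    intro n hn
    induction n, hn using Nat.le_induction with
    | base => simpa using ⟨hinj1, hsurj1⟩
    | succ n hn IH =>
      obtain ⟨IHinj, IHsurj⟩ := IH
      constructor
      · -- injectivity step
        intro r hr
        obtain ⟨s, hs⟩ := hr
        obtain ⟨r', rfl⟩ := IHinj r ⟨f ξ * s, by rw [hs, pow_succ]; ring⟩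
        rw [map_mul, map_pow, pow_succ] at hs
        have hzero : (f r' - f ξ * s) * f ξ ^ n = 0 := by linear_combination hs
        have hc : f r' = f ξ * s :=
          sub_eq_zero.mp ((mem_nonZeroDivisors_iff.mp (pow_mem hfξ n)).2 _ hzero)
        obtain ⟨r'', hr''⟩ := hinj1 r' ⟨s, hc⟩
        exact ⟨r'', by rw [hr'', pow_succ]; ring⟩
      · -- surjectivity step
        intro s hdvd
        obtain ⟨t, ht⟩ := hdvd
        obtain ⟨r, hr⟩ := IHsurj s ⟨g (f ξ) * t, by rw [ht, pow_succ]; ring⟩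
        obtain ⟨s', hrs'⟩ := hr
        have hg : g s - g (f r) = g (f ξ) ^ n * g s' := by
          have := congrArg g hrs'
          simpa only [map_sub, map_mul, map_pow] using this
        have hh : h s - h (f r) = g (f ξ) ^ n * h s' := by
          have := congrArg h hrs'
          rw [e]
          simpa only [map_sub, map_mul, map_pow] using this
        have hfr : g (f r) = h (f r) := RingHom.congr_fun hgf r
        have hzero : (g s' - h s' - g (f ξ) * t) * g (f ξ) ^ n = 0 := by
          linear_combination (-1 : T) * hg + hh + ht - hfr
        have hc : g s' - h s' = g (f ξ) * t :=
          sub_eq_zero.mp ((mem_nonZeroDivisors_iff.mp (pow_mem hgfξ n)).2 _ hzero)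
        obtain ⟨r', hr'⟩ := hsurj1 s' ⟨t, hc⟩
        obtain ⟨u, hu⟩ := hr'
        refine ⟨r + ξ ^ n * r', u, ?_⟩
        have hfr2 : f (r + ξ ^ n * r') = f r + f ξ ^ n * f r' := by
          simp [map_add, map_mul, map_pow]
        linear_combination hrs' + f ξ ^ n * hu - hfr2
  intro n hn
  obtain ⟨Kinj, Ksurj⟩ := key n hn
  exact aux_equalizer f g h hgf _ _ _
    (fun r hr => by
      rw [Ideal.mem_span_singleton] at hr ⊢
      exact Kinj r hr)
    (fun s hs => by
      rw [Ideal.mem_span_singleton] at hs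
      obtain ⟨r, hr⟩ := Ksurj s hs
      exact ⟨r, Ideal.mem_span_singleton.mpr hr⟩)
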